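/- If α_i, β_i ≥ 0 for all i and the curvature-type bounds 3Δ⁺β_i - Δ⁺α_i ≥ 2λ̃ and Δ⁻β_i - 3Δ⁻α_i ≥ 2λ̃ hold for all i with λ̃ > 0, then Γ₂^h(f,f)_i ≥ λ̃ Γ^h(f,f)_i for all f : ℤ → ℝ and all i. -/
import Mathlib

/-- Curvature condition: if `α, β ≥ 0` and the curvature-type lower bounds
`3Δ⁺β_i - Δ⁺α_i ≥ 2λ̃` and `Δ⁻β_i - 3Δ⁻α_i ≥ 2λ̃` hold with `λ̃ > 0`, then
`Γ₂^h(f,f)_i ≥ λ̃ Γ^h(f,f)_i` for all `f` and `i`. -/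
theorem curvature_condition (α β : ℤ → ℝ) (lam : ℝ)
    (hα : ∀ i, 0 ≤ α i) (hβ : ∀ i, 0 ≤ β i) (hlam : 0 < lam)
    (hcurv1 : ∀ i : ℤ, 3 * (β (i+1) - β i) - (α (i+1) - α i) ≥ 2 * lam)
    (hcurv2 : ∀ i : ℤ, (β i - β (i-1)) - 3 * (α i - α (i-1)) ≥ 2 * lam) :
    ∀ (f : ℤ → ℝ) (i : ℤ),
      (1/4) * α i * (3 * (β (i+1) - β i) - (α (i+1) - α i)) * (f (i+1) - f i)^2
        + (1/4) * β i * ((β i - β (i-1)) - 3 * (α i - α (i-1))) * (f i - f (i-1))^2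
        + (1/4) * α i * α (i+1) * ((f (i+2) - f (i+1)) - (f (i+1) - f i))^2
        + (1/4) * β i * β (i-1) * ((f (i-1) - f (i-2)) - (f i - f (i-1)))^2
        + (1/2) * α i * β i * ((f (i+1) - f i) - (f i - f (i-1)))^2
      ≥ lam * ((1/2) * α i * (f (i+1) - f i)^2 + (1/2) * β i * (f i - f (i-1))^2) := by
  intro f i
  have h1 := hcurv1 i
  have h2 := hcurv2 i
  have t1 : (1/4) * α i * (3 * (β (i+1) - β i) - (α (i+1) - α i)) * (f (i+1) - f i)^2
      ≥ lam * ((1/2) * α i * (f (i+1) - f i)^2) := by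
    nlinarith [hα i, sq_nonneg (f (i+1) - f i), mul_nonneg (hα i) (sq_nonneg (f (i+1) - f i))]
  have t2 : (1/4) * β i * ((β i - β (i-1)) - 3 * (α i - α (i-1))) * (f i - f (i-1))^2
      ≥ lam * ((1/2) * β i * (f i - f (i-1))^2) := by
    nlinarith [hβ i, sq_nonneg (f i - f (i-1)), mul_nonneg (hβ i) (sq_nonneg (f i - f (i-1)))]
  have t3 : 0 ≤ (1/4) * α i * α (i+1) * ((f (i+2) - f (i+1)) - (f (i+1) - f i))^2 := by
    have := hα i; have := hα (i+1); positivity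
  have t4 : 0 ≤ (1/4) * β i * β (i-1) * ((f (i-1) - f (i-2)) - (f i - f (i-1)))^2 := by
    have := hβ i; have := hβ (i-1); positivity
  have t5 : 0 ≤ (1/2) * α i * β i * ((f (i+1) - f i) - (f i - f (i-1)))^2 := by
    have := hα i; have := hβ i; positivity
  linarith
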